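/- Let n be a nonnegative integer and let a, b, c be complex numbers with (a−n)_{2n} ≠ 0, (b)_n ≠ 0, (1−a)_n ≠ 0, (1+c−a)_n ≠ 0, and (1+c−b−n)_{2n} ≠ 0. Then _4F_3(−n, a, a−c−n, c ; (a−n)/2, (1+a−n)/2, b ; 1/4) = [(1+c−a)_n (b−c)_n / ((1−a)_n (b)_n)] · _4F_3(−n, 1+c−b, 1−b−n, c ; (1+c−b−n)/2, (2+c−b−n)/2, 1+c−a ; 1/4), both sides being finite sums over k from 0 to n. -/

import Mathlib

open Finset

/-- The rising factorial (Pochhammer symbol) `(a)_k = a(a+1)⋯(a+k-1)`. -/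
noncomputable def poch (a : ℂ) (k : ℕ) : ℂ := ∏ i ∈ Finset.range k, (a + i)

lemma poch_zero (x : ℂ) : poch x 0 = 1 := by simp [poch]

lemma poch_succ (x : ℂ) (m : ℕ) : poch x (m + 1) = poch x m * (x + m) := by
  simp [poch, Finset.prod_range_succ]

lemma poch_succ' (x : ℂ) (m : ℕ) : poch x (m + 1) = x * poch (x + 1) m := by
  unfold poch
  rw [Finset.prod_range_succ']
  rw [mul_comm]
  congr 1
  · simp
  · exact Finset.prod_congr rfl (fun i _ => by push_cast; ring)

lemma poch_add (x : ℂ) (m k : ℕ) : poch x (m + k) = poch x m * poch (x + m) k := by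
  unfold poch
  rw [Finset.prod_range_add]
  congr 1
  exact Finset.prod_congr rfl (fun i _ => by push_cast; ring)

lemma poch_reflect (x : ℂ) : ∀ m : ℕ, poch x m = (-1) ^ m * poch (1 - x - m) m
  | 0 => by simp [poch_zero]
  | (m + 1) => by
    have IH := poch_reflect x m
    rw [poch_succ, poch_succ' (1 - x - ((m:ℕ)+1:ℕ)),
      show ((1:ℂ) - x - ((m+1 : ℕ):ℂ) + 1) = 1 - x - (m:ℂ) from by push_cast; ring,
      IH, pow_succ]
    push_cast
    ring

lemma poch_half (x : ℂ) : ∀ k : ℕ, poch (x / 2) k * poch ((x + 1) / 2) k * 4 ^ k = poch x (2 * k)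
  | 0 => by simp [poch_zero]
  | (k + 1) => by
    have IH := poch_half x k
    rw [show 2 * (k + 1) = 2 * k + 1 + 1 from by ring, poch_succ x (2 * k + 1),
      poch_succ x (2 * k), poch_succ (x / 2) k, poch_succ ((x + 1) / 2) k, pow_succ]
    push_cast
    linear_combination (x + 2 * (k:ℂ)) * (x + 2 * k + 1) * IH

lemma poch_neg_nat (n k : ℕ) (h : k ≤ n) :
    poch (-(n : ℂ)) k = (-1) ^ k * (Nat.factorial k : ℂ) * (n.choose k : ℂ) := by
  have h1 : poch (-(n : ℂ)) k = (-1) ^ k * ∏ i ∈ range k, ((n : ℂ) - i) := by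
    unfold poch
    rw [show ∏ i ∈ range k, (-(n : ℂ) + i) = ∏ i ∈ range k, (-1) * ((n : ℂ) - i) from
      Finset.prod_congr rfl (fun i _ => by ring)]
    rw [Finset.prod_mul_distrib, Finset.prod_const, Finset.card_range]
  rw [h1]
  have h2 : ∏ i ∈ range k, ((n : ℂ) - i) = (n.descFactorial k : ℂ) := by
    rw [Nat.descFactorial_eq_prod_range, Nat.cast_prod]
    exact Finset.prod_congr rfl (fun i hi => by
      rw [Nat.cast_sub ((Finset.mem_range.mp hi).le.trans h)])
  rw [h2, Nat.descFactorial_eq_factorial_mul_choose]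
  push_cast
  ring

lemma poch_vandermonde (x y : ℂ) : ∀ m : ℕ,
    poch (x + y) m = ∑ j ∈ range (m + 1), (m.choose j : ℂ) * poch x j * poch y (m - j)
  | 0 => by simp [poch_zero]
  | (m + 1) => by
    have IH := poch_vandermonde x y m
    rw [poch_succ, IH, Finset.sum_mul]
    have hsplit : ∀ j ∈ range (m + 1),
        (m.choose j : ℂ) * poch x j * poch y (m - j) * (x + y + (m : ℂ))
        = (m.choose j : ℂ) * (poch x (j + 1) * poch y (m - j))
          + (m.choose j : ℂ) * (poch x j * poch y (m + 1 - j)) := by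
      intro j hj
      have hj' : j ≤ m := Nat.lt_succ_iff.mp (Finset.mem_range.mp hj)
      have h1 : ((m - j : ℕ) : ℂ) = (m : ℂ) - j := by
        rw [Nat.cast_sub hj']
      have h2 : m + 1 - j = (m - j) + 1 := by omega
      rw [poch_succ x j, h2, poch_succ y (m - j), h1]
      ring
    rw [Finset.sum_congr rfl hsplit, Finset.sum_add_distrib]
    conv_rhs => rw [Finset.sum_range_succ']
    have hterm : ∀ j ∈ range (m + 1),
        ((m + 1).choose (j + 1) : ℂ) * poch x (j + 1) * poch y (m + 1 - (j + 1))
        = (m.choose j : ℂ) * (poch x (j + 1) * poch y (m - j))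
          + (m.choose (j + 1) : ℂ) * (poch x (j + 1) * poch y (m - j)) := by
      intro j hj
      rw [Nat.choose_succ_succ, Nat.succ_sub_succ]
      push_cast
      ring
    rw [Finset.sum_congr rfl hterm, Finset.sum_add_distrib]
    have hB : ∑ j ∈ range (m + 1), (m.choose j : ℂ) * (poch x j * poch y (m + 1 - j))
        = (∑ j ∈ range (m + 1), (m.choose (j + 1) : ℂ) * (poch x (j + 1) * poch y (m - j)))
          + ((m + 1).choose 0 : ℂ) * poch x 0 * poch y (m + 1 - 0) := by
      rw [Finset.sum_range_succ' (fun j => (m.choose j : ℂ) * (poch x j * poch y (m + 1 - j))) m]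
      rw [Finset.sum_range_succ]
      simp only [Nat.choose_succ_self, Nat.cast_zero, zero_mul, add_zero]
      congr 1
      · exact Finset.sum_congr rfl (fun j _ => by rw [Nat.succ_sub_succ])
      · simp [poch_zero]
    rw [hB]
    ring

lemma choose_swap {n k j : ℕ} (hk : k ≤ n) (hj : j ≤ n) :
    n.choose k * (n - k).choose j = n.choose j * (n - j).choose k := by
  by_cases h : k + j ≤ n
  · have h1 := Nat.choose_mul (n := n) (k := k + j) (s := k) (Nat.le_add_right k j)
    have h2 := Nat.choose_mul (n := n) (k := k + j) (s := j) (Nat.le_add_left j k)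
    simp only [Nat.add_sub_cancel_left, Nat.add_sub_cancel] at h1 h2
    rw [← h1, ← h2, Nat.choose_symm_add]
  · rw [Nat.choose_eq_zero_of_lt (by omega : n - k < j),
      Nat.choose_eq_zero_of_lt (by omega : n - j < k), Nat.mul_zero, Nat.mul_zero]

noncomputable def GG (n : ℕ) (A B C : ℂ) : ℂ :=
  ∑ k ∈ range (n + 1), ∑ j ∈ range (n + 1),
    (-1 : ℂ) ^ k * (n.choose k : ℂ) * ((n - k).choose j : ℂ) *
      poch C (k + j) * poch (A - C - n) (n - j) * poch (B + k) (n - k)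

lemma GG_symm (n : ℕ) (A B C : ℂ) : GG n A B C = GG n (1 + C - B) (1 + C - A) C := by
  unfold GG
  rw [Finset.sum_comm]
  refine Finset.sum_congr rfl (fun k hk => Finset.sum_congr rfl (fun j hj => ?_))
  have hk' : k ≤ n := Nat.lt_succ_iff.mp (Finset.mem_range.mp hk)
  have hj' : j ≤ n := Nat.lt_succ_iff.mp (Finset.mem_range.mp hj)
  -- rewrite the two pochhammers on the RHS by reflection
  have e1 : poch (1 + C - B - C - (n : ℂ)) (n - j) = (-1) ^ (n - j) * poch (B + j) (n - j) := by
    rw [poch_reflect (B + (j : ℂ)) (n - j), ← mul_assoc, ← pow_add,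
      show ((1 : ℂ) - (B + j) - ((n - j : ℕ) : ℂ)) = 1 + C - B - C - n from by
        rw [Nat.cast_sub hj']; ring]
    rw [show (n - j) + (n - j) = 2 * (n - j) from by ring, pow_mul]
    simp
  have e2 : poch (1 + C - A + (k : ℂ)) (n - k) = (-1) ^ (n - k) * poch (A - C - n) (n - k) := by
    rw [poch_reflect (A - C - (n : ℂ)) (n - k), ← mul_assoc, ← pow_add,
      show ((1 : ℂ) - (A - C - n) - ((n - k : ℕ) : ℂ)) = 1 + C - A + k from by
        rw [Nat.cast_sub hk']; ring]
    rw [show (n - k) + (n - k) = 2 * (n - k) from by ring, pow_mul]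
    simp
  rw [e1, e2]
  symm
  have hch : ((n.choose k : ℂ)) * ((n - k).choose j : ℂ) = (n.choose j : ℂ) * ((n - j).choose k : ℂ) := by
    rw [← Nat.cast_mul, ← Nat.cast_mul, choose_swap hk' hj']
  have hsign : (-1 : ℂ) ^ k * ((-1) ^ (n - j) * (-1) ^ (n - k)) = (-1) ^ j := by
    have h1 : (-1 : ℂ) ^ k * (-1) ^ (n - k) = (-1) ^ n := by
      rw [← pow_add, Nat.add_sub_cancel' hk']
    have h2 : (-1 : ℂ) ^ j * (-1) ^ (n - j) = (-1) ^ n := by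
      rw [← pow_add, Nat.add_sub_cancel' hj']
    have h3 : (-1 : ℂ) ^ (n - j) * (-1) ^ (n - j) = 1 := by
      rw [← pow_add, show (n - j) + (n - j) = 2 * (n - j) from by ring, pow_mul]
      simp
    calc (-1 : ℂ) ^ k * ((-1) ^ (n - j) * (-1) ^ (n - k))
        = ((-1 : ℂ) ^ k * (-1) ^ (n - k)) * (-1) ^ (n - j) := by ring
      _ = (-1 : ℂ) ^ n * (-1) ^ (n - j) := by rw [h1]
      _ = ((-1 : ℂ) ^ j * (-1) ^ (n - j)) * (-1) ^ (n - j) := by rw [h2]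
      _ = (-1 : ℂ) ^ j * ((-1 : ℂ) ^ (n - j) * (-1) ^ (n - j)) := by ring
      _ = (-1 : ℂ) ^ j := by rw [h3, mul_one]
  calc (-1 : ℂ) ^ k * (n.choose k : ℂ) * ((n - k).choose j : ℂ) * poch C (k + j) *
        ((-1) ^ (n - j) * poch (B + j) (n - j)) * ((-1) ^ (n - k) * poch (A - C - n) (n - k))
      = ((-1 : ℂ) ^ k * ((-1) ^ (n - j) * (-1) ^ (n - k))) *
          ((n.choose k : ℂ) * ((n - k).choose j : ℂ)) * poch C (k + j) *
          poch (B + j) (n - j) * poch (A - C - n) (n - k) := by ring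
    _ = (-1 : ℂ) ^ j * ((n.choose j : ℂ) * ((n - j).choose k : ℂ)) * poch C (k + j) *
          poch (B + j) (n - j) * poch (A - C - n) (n - k) := by rw [hsign, hch]
    _ = (-1 : ℂ) ^ j * (n.choose j : ℂ) * ((n - j).choose k : ℂ) * poch C (j + k) *
          poch (A - C - n) (n - k) * poch (B + j) (n - j) := by rw [Nat.add_comm j k]; ring

lemma expand_sum (n k : ℕ) (hk : k ≤ n) (A C : ℂ) :
    poch (A - (n : ℂ) + 2 * k) (n - k) * (poch (A - C - (n : ℂ)) k * poch C k)
    = ∑ j ∈ range (n + 1), ((n - k).choose j : ℂ) * poch C (k + j) * poch (A - C - (n : ℂ)) (n - j) := by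
  rw [show A - (n : ℂ) + 2 * k = (C + k) + (A - C - n + k) from by ring,
    poch_vandermonde, Finset.sum_mul]
  rw [← Finset.sum_subset (Finset.range_subset_range.mpr (by omega : n - k + 1 ≤ n + 1))
    (fun j hj hj2 => by
      have : (n - k).choose j = 0 := Nat.choose_eq_zero_of_lt (by
        simp only [Finset.mem_range] at hj hj2; omega)
      rw [this]; simp)]
  refine Finset.sum_congr rfl (fun j hj => ?_)
  have hj' : j ≤ n - k := Nat.lt_succ_iff.mp (Finset.mem_range.mp hj)
  rw [poch_add C k j, show n - j = k + (n - k - j) from by omega, poch_add (A - C - (n:ℂ)) k (n - k - j)]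
  ring

lemma key (n : ℕ) (A B C : ℂ) (hA : poch (A - (n : ℂ)) (2 * n) ≠ 0) (hB : poch B n ≠ 0) :
    poch (1 - A) n * poch B n *
      ∑ k ∈ range (n + 1),
        (poch (-(n : ℂ)) k * poch A k * poch (A - C - (n : ℂ)) k * poch C k) /
          ((Nat.factorial k : ℂ) * poch ((A - (n : ℂ)) / 2) k *
            poch ((1 + A - (n : ℂ)) / 2) k * poch B k) * (1 / 4 : ℂ) ^ k
    = (-1 : ℂ) ^ n * GG n A B C := by
  unfold GG
  rw [Finset.mul_sum, Finset.mul_sum]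
  refine Finset.sum_congr rfl (fun k hk => ?_)
  have hk' : k ≤ n := Nat.lt_succ_iff.mp (Finset.mem_range.mp hk)
  -- nonvanishing facts
  have h2k : poch (A - (n : ℂ)) (2 * k) ≠ 0 := by
    have h := poch_add (A - (n : ℂ)) (2 * k) (2 * n - 2 * k)
    rw [show 2 * k + (2 * n - 2 * k) = 2 * n from by omega] at h
    exact fun h0 => hA (by rw [h, h0, zero_mul])
  have hBsplit := poch_add B k (n - k)
  rw [show k + (n - k) = n from by omega] at hBsplit
  have hBk : poch B k ≠ 0 := fun h0 => hB (by rw [hBsplit, h0, zero_mul])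
  have hfac : ((Nat.factorial k : ℕ) : ℂ) ≠ 0 := Nat.cast_ne_zero.mpr (Nat.factorial_ne_zero k)
  have hhalf := poch_half (A - (n : ℂ)) k
  rw [show (A - (n : ℂ) + 1) / 2 = (1 + A - (n : ℂ)) / 2 from by ring] at hhalf
  have hP1 : poch ((A - (n : ℂ)) / 2) k ≠ 0 := by
    intro h0; apply h2k; rw [← hhalf, h0]; ring
  have hP2 : poch ((1 + A - (n : ℂ)) / 2) k ≠ 0 := by
    intro h0; apply h2k; rw [← hhalf, h0]; ring
  have h14 : (1 / 4 : ℂ) ^ k * 4 ^ k = 1 := by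
    rw [← mul_pow]; norm_num
  -- collapse the halved denominators
  have hterm :
      (poch (-(n : ℂ)) k * poch A k * poch (A - C - (n : ℂ)) k * poch C k) /
          ((Nat.factorial k : ℂ) * poch ((A - (n : ℂ)) / 2) k *
            poch ((1 + A - (n : ℂ)) / 2) k * poch B k) * (1 / 4 : ℂ) ^ k
      = (poch (-(n : ℂ)) k * poch A k * poch (A - C - (n : ℂ)) k * poch C k) /
          ((Nat.factorial k : ℂ) * poch (A - (n : ℂ)) (2 * k) * poch B k) := by
    rw [div_mul_eq_mul_div, div_eq_div_iff
      (mul_ne_zero (mul_ne_zero (mul_ne_zero hfac hP1) hP2) hBk)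
      (mul_ne_zero (mul_ne_zero hfac h2k) hBk)]
    linear_combination
      (-(poch (-(n : ℂ)) k * poch A k * poch (A - C - (n : ℂ)) k * poch C k *
          (Nat.factorial k : ℂ) * poch B k * (1 / 4 : ℂ) ^ k)) * hhalf +
      (poch (-(n : ℂ)) k * poch A k * poch (A - C - (n : ℂ)) k * poch C k *
          (Nat.factorial k : ℂ) * poch B k * poch ((A - (n : ℂ)) / 2) k *
          poch ((1 + A - (n : ℂ)) / 2) k) * h14
  rw [hterm]
  -- main algebra
  have hw := poch_neg_nat n k hk'
  have hu : poch (1 - A) n = (-1 : ℂ) ^ n * poch (A - (n : ℂ)) n := by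
    have h := poch_reflect (A - (n : ℂ)) n
    rw [show (1 : ℂ) - (A - (n : ℂ)) - (n : ℂ) = 1 - A from by ring] at h
    rw [h, ← mul_assoc, ← pow_add, show n + n = 2 * n from by ring, pow_mul]
    simp
  have hsplitA : poch (A - (n : ℂ)) n * poch A k
      = poch (A - (n : ℂ)) (2 * k) * poch (A - (n : ℂ) + 2 * (k : ℂ)) (n - k) := by
    have h1 := poch_add (A - (n : ℂ)) n k
    rw [show A - (n : ℂ) + (n : ℂ) = A from by ring] at h1
    have h2 := poch_add (A - (n : ℂ)) (2 * k) (n - k)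
    rw [show 2 * k + (n - k) = n + k from by omega] at h2
    rw [← h1, h2]
    norm_num [Nat.cast_mul]
  have hS := expand_sum n k hk' A C
  -- rewrite the inner sum
  have hSk : ∑ j ∈ range (n + 1),
      (-1 : ℂ) ^ k * (n.choose k : ℂ) * ((n - k).choose j : ℂ) *
        poch C (k + j) * poch (A - C - (n : ℂ)) (n - j) * poch (B + k) (n - k)
      = (-1 : ℂ) ^ k * (n.choose k : ℂ) * poch (B + (k : ℂ)) (n - k) *
        (poch (A - (n : ℂ) + 2 * (k : ℂ)) (n - k) *
          (poch (A - C - (n : ℂ)) k * poch C k)) := by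
    rw [hS, Finset.mul_sum]
    exact Finset.sum_congr rfl (fun j _ => by ring)
  rw [← mul_div_assoc, div_eq_iff (mul_ne_zero (mul_ne_zero hfac h2k) hBk), hSk, hw, hu, hBsplit]
  linear_combination ((-1 : ℂ) ^ n * (-1 : ℂ) ^ k * (Nat.factorial k : ℂ) * (n.choose k : ℂ) *
    poch B k * poch (B + (k : ℂ)) (n - k) *
    (poch (A - C - (n : ℂ)) k * poch C k)) * hsplitA

theorem stmt_13 (n : ℕ) (a b c : ℂ)
    (han : poch (a - (n : ℂ)) (2 * n) ≠ 0) (hb : poch b n ≠ 0)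
    (h1a : poch (1 - a) n ≠ 0) (hca : poch (1 + c - a) n ≠ 0)
    (hcb : poch (1 + c - b - (n : ℂ)) (2 * n) ≠ 0) :
    ∑ k ∈ range (n + 1),
      (poch (-(n : ℂ)) k * poch a k * poch (a - c - (n : ℂ)) k * poch c k) /
        ((Nat.factorial k : ℂ) * poch ((a - (n : ℂ)) / 2) k *
          poch ((1 + a - (n : ℂ)) / 2) k * poch b k) * (1 / 4 : ℂ) ^ k
    = poch (1 + c - a) n * poch (b - c) n / (poch (1 - a) n * poch b n) *
      ∑ k ∈ range (n + 1),
        (poch (-(n : ℂ)) k * poch (1 + c - b) k * poch (1 - b - (n : ℂ)) k * poch c k) /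
          ((Nat.factorial k : ℂ) * poch ((1 + c - b - (n : ℂ)) / 2) k *
            poch ((2 + c - b - (n : ℂ)) / 2) k * poch (1 + c - a) k) *
          (1 / 4 : ℂ) ^ k := by
  have E1 := key n a b c han hb
  have E2 := key n (1 + c - b) (1 + c - a) c hcb hca
  rw [show (1 : ℂ) + c - b - c - (n : ℂ) = 1 - b - (n : ℂ) from by ring,
    show ((1 : ℂ) + (1 + c - b) - (n : ℂ)) / 2 = (2 + c - b - (n : ℂ)) / 2 from by ring,
    show (1 : ℂ) - (1 + c - b) = b - c from by ring] at E2
  have hG := GG_symm n a b c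
  rw [div_mul_eq_mul_div, eq_div_iff (mul_ne_zero h1a hb)]
  linear_combination E1 - E2 + (-1 : ℂ) ^ n * hG
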